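/- Let L be a free R-lattice (R = ℤ_(p)C_p) with an R-valued Hermitian form h (with respect to the canonical involution), and let B = (1/p)·Tr_reg ∘ h be the associated ℤ_(p)-valued σ-invariant bilinear form. Then the Hermitian dual lattice of L with respect to h coincides with the dual lattice of L with respect to B. In particular, the dual of a free R-lattice with R-basis (g₁, ..., g_a) is again free, with the Hermitian dual basis (g₁*, ..., g_a*) as an R-basis. -/

import Mathlib

open scoped BigOperators

set_option synthInstance.maxHeartbeats 1000000
set_option maxHeartbeats 1000000

abbrev Cp (p : ℕ) := Multiplicative (ZMod p)

/-- The canonical involution of the group algebra, sending `σ^i` to `σ^{-i}`. -/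
noncomputable def conjQCp (p : ℕ) :
    MonoidAlgebra ℚ (Cp p) →+* MonoidAlgebra ℚ (Cp p) :=
  MonoidAlgebra.mapDomainRingHom ℚ (invMonoidHom : Cp p →* Cp p)

/-- The regular trace of the `p`-dimensional `ℚ`-algebra `ℚC_p`. -/
noncomputable def trReg (p : ℕ) (x : MonoidAlgebra ℚ (Cp p)) : ℚ :=
  LinearMap.trace ℚ (MonoidAlgebra ℚ (Cp p)) (LinearMap.mulLeft ℚ x)

/-- The bilinear form `b(x,y) = (1/p)·Tr_reg(x·ȳ)` on `ℚC_p`. -/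
noncomputable def formB (p : ℕ) (x y : MonoidAlgebra ℚ (Cp p)) : ℚ :=
  (p : ℚ)⁻¹ * trReg p (x * conjQCp p y)


def Zsub (p : ℕ) [Fact p.Prime] : Subring ℚ where
  carrier := {x : ℚ | ¬ (p ∣ x.den)}
  zero_mem' := by simp [Nat.Prime.ne_one (Fact.out (p := p.Prime))]
  one_mem' := by simp [Nat.Prime.ne_one (Fact.out (p := p.Prime))]
  add_mem' := by
    intro a b ha hb hd
    rcases (Nat.Prime.dvd_mul (Fact.out (p := p.Prime))).1
      (hd.trans (Rat.add_den_dvd a b)) with h | h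
    exacts [ha h, hb h]
  mul_mem' := by
    intro a b ha hb hd
    rcases (Nat.Prime.dvd_mul (Fact.out (p := p.Prime))).1
      (hd.trans (Rat.mul_den_dvd a b)) with h | h
    exacts [ha h, hb h]
  neg_mem' := by intro a ha; simpa using ha

noncomputable instance zsubModule (p : ℕ) [Fact p.Prime] (V : Type*) [AddCommGroup V]
    [Module ℚ V] : Module (Zsub p) V :=
  Module.compHom V (algebraMap (Zsub p) ℚ)

/-- The standard lattice `R = ℤ_(p) C_p` inside `ℚC_p`, the `ℤ_(p)`-span of the
group elements. -/
noncomputable def Rlat (p : ℕ) [Fact p.Prime] :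
    Submodule (Zsub p) (MonoidAlgebra ℚ (Cp p)) :=
  Submodule.span (Zsub p) (Set.range (MonoidAlgebra.of ℚ (Cp p)))


/-- The Hermitian form on the free module `(ℚC_p)^a` determined by a Gram
matrix `G`: `h(x,y) = ∑ᵢⱼ xᵢ · conj(yⱼ) · Gᵢⱼ`. -/
noncomputable def hermForm (p : ℕ) (a : ℕ)
    (G : Matrix (Fin a) (Fin a) (MonoidAlgebra ℚ (Cp p)))
    (x y : Fin a → MonoidAlgebra ℚ (Cp p)) : MonoidAlgebra ℚ (Cp p) :=
  ∑ i, ∑ j, x i * conjQCp p (y j) * G i j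

section Aux

variable (p : ℕ) [Fact p.Prime]

lemma conj_single (g : Cp p) (c : ℚ) :
    conjQCp p (MonoidAlgebra.single g c) = MonoidAlgebra.single g⁻¹ c := by
  simp [conjQCp, MonoidAlgebra.mapDomainRingHom, Finsupp.mapDomain_single]

lemma conj_apply (x : MonoidAlgebra ℚ (Cp p)) (g : Cp p) :
    (conjQCp p x).coeff g = x.coeff g⁻¹ := by
  have h : (conjQCp p x).coeff = Finsupp.mapDomain (fun g : Cp p => g⁻¹) x.coeff := by
    simp only [conjQCp, MonoidAlgebra.mapDomainRingHom]; rfl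
  rw [h]
  have := Finsupp.mapDomain_apply (f := fun g : Cp p => g⁻¹)
    (fun a b hab => inv_injective hab) x.coeff g⁻¹
  simpa using this

lemma conj_conj (x : MonoidAlgebra ℚ (Cp p)) : conjQCp p (conjQCp p x) = x := by
  ext g; rw [conj_apply, conj_apply, inv_inv]
lemma zsmul_def (c : Zsub p) (x : MonoidAlgebra ℚ (Cp p)) : c • x = (c : ℚ) • x := rfl

lemma mem_Rlat_iff (x : MonoidAlgebra ℚ (Cp p)) :
    x ∈ Rlat p ↔ ∀ g : Cp p, x.coeff g ∈ Zsub p := by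
  constructor
  · intro hx g
    induction hx using Submodule.span_induction with
    | mem y hy =>
      obtain ⟨h, rfl⟩ := hy
      simp only [MonoidAlgebra.of_apply, MonoidAlgebra.coeff_single, Finsupp.single_apply]
      split
      · exact one_mem _
      · exact zero_mem _
    | zero => exact zero_mem _
    | add y z _ _ hy hz => simpa using add_mem hy hz
    | smul c y _ hy =>
      change ((c : ℚ) • y).coeff g ∈ _
      simpa using mul_mem c.2 hy
  · intro hx
    have hxe : x = ∑ g ∈ x.coeff.support, (⟨x.coeff g, hx g⟩ : Zsub p) • (MonoidAlgebra.single g 1) := by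
      rw [Finset.sum_congr rfl (fun g _ => by
        rw [zsmul_def, MonoidAlgebra.smul_single, smul_eq_mul, mul_one])]
      exact (MonoidAlgebra.sum_coeff_single x).symm
    rw [hxe]
    exact Submodule.sum_mem _ (fun g _ =>
      Submodule.smul_mem _ _ (Submodule.subset_span ⟨g, rfl⟩))
lemma Rlat.one_mem' : (1 : MonoidAlgebra ℚ (Cp p)) ∈ Rlat p :=
  Submodule.subset_span ⟨1, rfl⟩

lemma Rlat.mul_mem' {x y : MonoidAlgebra ℚ (Cp p)} (hx : x ∈ Rlat p) (hy : y ∈ Rlat p) :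
    x * y ∈ Rlat p := by
  rw [mem_Rlat_iff] at *
  intro g
  classical
  rw [MonoidAlgebra.coeff_mul]
  simp only [Finsupp.sum]
  refine sum_mem (fun a ha => sum_mem (fun b hb => ?_))
  split
  · exact mul_mem (hx a) (hy b)
  · exact zero_mem _

lemma Rlat.conj_mem {x : MonoidAlgebra ℚ (Cp p)} (hx : x ∈ Rlat p) :
    conjQCp p x ∈ Rlat p := by
  rw [mem_Rlat_iff] at *
  intro g; rw [conj_apply]; exact hx _

noncomputable instance : Fintype (Cp p) := by
  have : NeZero p := ⟨(Fact.out (p := p.Prime)).ne_zero⟩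
  unfold Cp; infer_instance

lemma trReg_eq (x : MonoidAlgebra ℚ (Cp p)) : trReg p x = p * x.coeff 1 := by
  classical
  let b : Module.Basis (Cp p) ℚ (MonoidAlgebra ℚ (Cp p)) := MonoidAlgebra.basis (Cp p) ℚ
  rw [trReg, LinearMap.trace_eq_matrix_trace ℚ b, Matrix.trace]
  have hdiag : ∀ g : Cp p,
      ((LinearMap.toMatrix b b (LinearMap.mulLeft ℚ x)).diag) g = x.coeff 1 := by
    intro g
    rw [Matrix.diag, LinearMap.toMatrix_apply]
    have hb : b g = MonoidAlgebra.single g 1 := rfl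
    have hrepr : (b.repr (x * b g)) g = (x * MonoidAlgebra.single g 1 : MonoidAlgebra ℚ (Cp p)).coeff g := rfl
    rw [LinearMap.mulLeft_apply, hrepr,
      MonoidAlgebra.coeff_mul_single_apply, mul_one, mul_inv_cancel]
  rw [Finset.sum_congr rfl (fun g _ => hdiag g)]
  have : NeZero p := ⟨(Fact.out (p := p.Prime)).ne_zero⟩
  simp [Finset.card_univ, Finset.sum_const, Cp]
lemma trReg_coeff (r : MonoidAlgebra ℚ (Cp p)) : (p : ℚ)⁻¹ * trReg p r = r.coeff 1 := by
  have hp : (p : ℚ) ≠ 0 := by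
    exact_mod_cast (Fact.out (p := p.Prime)).ne_zero
  rw [trReg_eq, ← mul_assoc, inv_mul_cancel₀ hp, one_mul]

lemma herm_smul (a : ℕ) (G : Matrix (Fin a) (Fin a) (MonoidAlgebra ℚ (Cp p)))
    (x l : Fin a → MonoidAlgebra ℚ (Cp p)) (s : MonoidAlgebra ℚ (Cp p)) :
    hermForm p a G x (fun j => s * l j) = conjQCp p s * hermForm p a G x l := by
  simp only [hermForm, map_mul, Finset.mul_sum]
  exact Finset.sum_congr rfl fun i _ => Finset.sum_congr rfl fun j _ => by ring

lemma herm_single (a : ℕ) (G : Matrix (Fin a) (Fin a) (MonoidAlgebra ℚ (Cp p)))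
    (x : Fin a → MonoidAlgebra ℚ (Cp p)) (j : Fin a) :
    hermForm p a G x (Pi.single j 1) = ∑ i, x i * G i j := by
  simp only [hermForm]
  refine Finset.sum_congr rfl fun i _ => ?_
  rw [Finset.sum_eq_single j]
  · simp
  · intro k _ hk
    simp [Pi.single_apply, hk]
  · simp
set_option linter.unusedSectionVars false

lemma Ginv_conj (a : ℕ) (G Ginv : Matrix (Fin a) (Fin a) (MonoidAlgebra ℚ (Cp p)))
    (hGherm : ∀ i j, conjQCp p (G i j) = G j i)
    (hGG : G * Ginv = 1) (hGG' : Ginv * G = 1) (i j : Fin a) :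
    conjQCp p (Ginv i j) = Ginv j i := by
  set M : Matrix (Fin a) (Fin a) (MonoidAlgebra ℚ (Cp p)) :=
    Matrix.of (fun i j => conjQCp p (Ginv j i)) with hM
  have hMG : M * G = 1 := by
    apply Matrix.ext; intro i k
    rw [Matrix.mul_apply]
    have step : ∀ j, M i j * G j k = conjQCp p (G k j * Ginv j i) := by
      intro j
      rw [hM, map_mul, hGherm k j, Matrix.of_apply, mul_comm]
    rw [Finset.sum_congr rfl fun j _ => step j, ← map_sum, ← Matrix.mul_apply, hGG]
    simp [Matrix.one_apply, eq_comm, apply_ite (conjQCp p)]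
  have h2 : M = Ginv := left_inv_eq_right_inv hMG hGG
  have : M j i = Ginv j i := by rw [h2]
  simpa [hM] using this

lemma herm_expand (a : ℕ) (G : Matrix (Fin a) (Fin a) (MonoidAlgebra ℚ (Cp p)))
    (x l : Fin a → MonoidAlgebra ℚ (Cp p)) :
    hermForm p a G x l = ∑ i, x i * (∑ m, conjQCp p (l m) * G i m) := by
  simp only [hermForm, Finset.mul_sum, mul_assoc]

lemma sum_rot {M : Type*} [AddCommMonoid M] {n : ℕ} (T : Fin n → Fin n → Fin n → M) :
    ∑ x, ∑ y, ∑ j, T x y j = ∑ j, ∑ x, ∑ y, T x y j :=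
  (Finset.sum_congr rfl fun x _ => Finset.sum_comm).trans Finset.sum_comm

lemma herm_sum_smul (a : ℕ) (G : Matrix (Fin a) (Fin a) (MonoidAlgebra ℚ (Cp p)))
    (c : Fin a → MonoidAlgebra ℚ (Cp p)) (f : Fin a → Fin a → MonoidAlgebra ℚ (Cp p))
    (l : Fin a → MonoidAlgebra ℚ (Cp p)) :
    hermForm p a G (∑ j, c j • f j) l = ∑ j, c j * hermForm p a G (f j) l := by
  simp only [herm_expand p a G, Finset.sum_apply, Pi.smul_apply, smul_eq_mul,
    Finset.sum_mul, Finset.mul_sum, mul_assoc]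
  rw [sum_rot]

lemma herm_gstar_row (a : ℕ) (G Ginv : Matrix (Fin a) (Fin a) (MonoidAlgebra ℚ (Cp p)))
    (hGG' : Ginv * G = 1) (j : Fin a) (l : Fin a → MonoidAlgebra ℚ (Cp p)) :
    hermForm p a G (fun i => Ginv j i) l = conjQCp p (l j) := by
  rw [herm_expand]
  simp only [Finset.mul_sum]
  rw [Finset.sum_comm]
  have key : ∀ m, (∑ i, Ginv j i * (conjQCp p (l m) * G i m))
      = conjQCp p (l m) * (Ginv * G) j m := by
    intro m; rw [Matrix.mul_apply, Finset.mul_sum]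
    exact Finset.sum_congr rfl fun i _ => by ring
  rw [Finset.sum_congr rfl fun m _ => key m, hGG', Finset.sum_eq_single j]
  · simp [Matrix.one_apply]
  · intro m _ hm
    simp [Matrix.one_apply, Ne.symm hm]
  · simp

lemma Rlat.single_mem (g : Cp p) : MonoidAlgebra.single g (1 : ℚ) ∈ Rlat p := by
  have h : MonoidAlgebra.of ℚ (Cp p) g ∈ Rlat p := Submodule.subset_span ⟨g, rfl⟩
  simpa using h

end Aux

/-- Let `L = R^a` be a free `R`-lattice (`R = ℤ_(p)C_p`) inside
`(ℚC_p)^a` with an `R`-valued Hermitian form `h` (given by a Hermitian Gram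
matrix `G` with entries in `R`, nondegenerate), and let
`B = (1/p)·Tr_reg ∘ h` be the associated `ℤ_(p)`-valued `σ`-invariant bilinear
form. Then the Hermitian dual of `L` with respect to `h` coincides with the
dual lattice of `L` with respect to `B`; moreover this dual is again a free
`R`-lattice, with the Hermitian dual basis `(g₁*, …, g_a*)` (characterized by
`h(eᵢ, gⱼ*) = δᵢⱼ`) as an `R`-basis. -/
theorem stmt14 (p : ℕ) [Fact p.Prime] (a : ℕ)
    (G : Matrix (Fin a) (Fin a) (MonoidAlgebra ℚ (Cp p)))
    (hGherm : ∀ i j, conjQCp p (G i j) = G j i)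
    (hGR : ∀ i j, G i j ∈ Rlat p)
    (hGunit : IsUnit G) :
    (∀ x : Fin a → MonoidAlgebra ℚ (Cp p),
      (∀ l : Fin a → MonoidAlgebra ℚ (Cp p), (∀ i, l i ∈ Rlat p) →
          hermForm p a G x l ∈ Rlat p) ↔
      (∀ l : Fin a → MonoidAlgebra ℚ (Cp p), (∀ i, l i ∈ Rlat p) →
          (p : ℚ)⁻¹ * trReg p (hermForm p a G x l) ∈ Zsub p)) ∧
    ∃ gstar : Fin a → (Fin a → MonoidAlgebra ℚ (Cp p)),
      (∀ i j, hermForm p a G (Pi.single i 1) (gstar j) =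
        if i = j then 1 else 0) ∧
      ∀ x : Fin a → MonoidAlgebra ℚ (Cp p),
        (∀ l : Fin a → MonoidAlgebra ℚ (Cp p), (∀ i, l i ∈ Rlat p) →
            hermForm p a G x l ∈ Rlat p) ↔
        ∃ c : Fin a → MonoidAlgebra ℚ (Cp p),
          (∀ i, c i ∈ Rlat p) ∧ x = ∑ i, c i • gstar i := by
  classical
  obtain ⟨Ginv, hGG, hGG'⟩ : ∃ Ginv, G * Ginv = 1 ∧ Ginv * G = 1 := by
    refine ⟨↑hGunit.unit⁻¹, ?_, ?_⟩
    · have := hGunit.unit.mul_inv; rwa [IsUnit.unit_spec] at this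
    · have := hGunit.unit.inv_mul; rwa [IsUnit.unit_spec] at this
  have hconjinv : ∀ i j, conjQCp p (Ginv i j) = Ginv j i :=
    Ginv_conj p a G Ginv hGherm hGG hGG'
  have hsingleR : ∀ j i : Fin a, (Pi.single j 1 : Fin a → MonoidAlgebra ℚ (Cp p)) i ∈ Rlat p := by
    intro j i
    rcases eq_or_ne i j with h | h
    · rw [h, Pi.single_eq_same]; exact Rlat.one_mem' p
    · rw [Pi.single_eq_of_ne h]; exact zero_mem _
  constructor
  · intro x
    constructor
    · intro hx l hl
      rw [trReg_coeff]
      exact (mem_Rlat_iff p _).1 (hx l hl) 1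
    · intro hx l hl
      rw [mem_Rlat_iff]
      intro g
      have hl' : ∀ i, MonoidAlgebra.single g 1 * l i ∈ Rlat p := fun i =>
        Rlat.mul_mem' p (Rlat.single_mem p g) (hl i)
      have h2 := hx (fun i => MonoidAlgebra.single g 1 * l i) hl'
      rw [trReg_coeff, herm_smul, conj_single] at h2
      rwa [MonoidAlgebra.coeff_single_mul_apply, one_mul, inv_inv, mul_one] at h2
  · refine ⟨fun j => fun k => conjQCp p (Ginv k j), ?_, ?_⟩
    · intro i j
      show hermForm p a G (Pi.single i 1) (fun k => conjQCp p (Ginv k j)) = _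
      rw [herm_expand, Finset.sum_eq_single i]
      · rw [Pi.single_eq_same, one_mul]
        have hm : ∀ m, conjQCp p (conjQCp p (Ginv m j)) * G i m = G i m * Ginv m j := by
          intro m; rw [conj_conj]; ring
        rw [Finset.sum_congr rfl fun m _ => hm m, ← Matrix.mul_apply, hGG, Matrix.one_apply]
      · intro b _ hb
        rw [Pi.single_eq_of_ne hb, zero_mul]
      · simp
    · intro x
      constructor
      · intro hx
        refine ⟨fun j => ∑ i, x i * G i j, fun j => ?_, ?_⟩
        · have := hx (Pi.single j 1) (hsingleR j)
          rwa [herm_single] at this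
        · funext k
          have hgk : ∀ j, (fun k => conjQCp p (Ginv k j)) k = Ginv j k := fun j => hconjinv k j
          rw [Finset.sum_apply]
          simp only [Pi.smul_apply, smul_eq_mul, hconjinv]
          symm
          calc ∑ j, (∑ i, x i * G i j) * Ginv j k
              = ∑ j, ∑ i, x i * (G i j * Ginv j k) := by
                refine Finset.sum_congr rfl fun j _ => ?_
                rw [Finset.sum_mul]
                exact Finset.sum_congr rfl fun i _ => by ring
            _ = ∑ i, ∑ j, x i * (G i j * Ginv j k) := Finset.sum_comm
            _ = ∑ i, x i * (G * Ginv) i k := by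
                refine Finset.sum_congr rfl fun i _ => ?_
                rw [Matrix.mul_apply, Finset.mul_sum]
            _ = x k := by
                rw [hGG]
                rw [Finset.sum_eq_single k]
                · simp [Matrix.one_apply]
                · intro i _ hi; simp [Matrix.one_apply, hi]
                · simp
      · rintro ⟨c, hc, rfl⟩ l hl
        rw [herm_sum_smul]
        refine Submodule.sum_mem _ fun j _ => ?_
        have : hermForm p a G (fun k => conjQCp p (Ginv k j)) l = conjQCp p (l j) := by
          have heq : (fun k => conjQCp p (Ginv k j)) = fun i => Ginv j i := by
            funext k; rw [hconjinv]
          rw [heq]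
          exact herm_gstar_row p a G Ginv hGG' j l
        rw [this]
        exact Rlat.mul_mem' p (hc j) (Rlat.conj_mem p (hl j))
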